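/- The map f(w) = Re(w) (the real part of w) is a contraction of the open unit disc D with respect to the hyperbolic metric: for all z, w in D, ρ(Re z, Re w) ≤ ρ(z, w). Moreover, for any two distinct real numbers a, b in D one has ρ(f(a), a) = ρ(f(b), b) = 0, while ρ(f(z), z) > 0 for every non-real z in D; hence the two-point inequality ρ(f(z),z) ≤ K·(ρ(f(a),a) + ρ(f(b),b)) fails for this contraction. -/

import Mathlib

open Complex Metric Set

/-- The hyperbolic metric on the open unit disc:
`ρ(u,v) = 2 · arsinh (|u − v| / √((1 − |u|²)(1 − |v|²)))`. -/
noncomputable def rho (u v : ℂ) : ℝ :=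
  2 * Real.arsinh (‖u - v‖ /
    Real.sqrt ((1 - ‖u‖ ^ 2) * (1 - ‖v‖ ^ 2)))

lemma rho_self (u : ℂ) : rho u u = 0 := by
  simp [rho]

lemma rho_re_pos {z : ℂ} (hz : z ∈ ball (0:ℂ) 1) (him : z.im ≠ 0) :
    0 < rho (z.re : ℂ) z := by
  rw [mem_ball_zero_iff] at hz
  have hre : ‖(z.re : ℂ)‖ < 1 :=
    lt_of_le_of_lt (by simpa using Complex.abs_re_le_norm z) hz
  have h1 : 0 < 1 - ‖(z.re : ℂ)‖ ^ 2 := by nlinarith [norm_nonneg (z.re : ℂ)]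
  have h2 : 0 < 1 - ‖z‖ ^ 2 := by nlinarith [norm_nonneg z]
  have hden : 0 < Real.sqrt ((1 - ‖(z.re : ℂ)‖ ^ 2) * (1 - ‖z‖ ^ 2)) :=
    Real.sqrt_pos.mpr (mul_pos h1 h2)
  have hnum : 0 < ‖(z.re : ℂ) - z‖ := by
    rw [norm_pos_iff]
    intro h
    apply him
    have := congrArg Complex.im h
    simpa using this
  have : 0 < ‖(z.re : ℂ) - z‖ /
      Real.sqrt ((1 - ‖(z.re : ℂ)‖ ^ 2) * (1 - ‖z‖ ^ 2)) :=
    div_pos hnum hden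
  have := Real.arsinh_pos_iff.mpr this
  unfold rho
  linarith

theorem re_contraction_counterexample :
    (∀ z ∈ ball (0:ℂ) 1, ∀ w ∈ ball (0:ℂ) 1,
      rho (z.re : ℂ) (w.re : ℂ) ≤ rho z w) ∧
    (∀ a b : ℝ, (a : ℂ) ∈ ball (0:ℂ) 1 → (b : ℂ) ∈ ball (0:ℂ) 1 → a ≠ b →
      rho (((a : ℂ).re : ℂ)) (a : ℂ) = 0 ∧ rho (((b : ℂ).re : ℂ)) (b : ℂ) = 0) ∧
    (∀ z ∈ ball (0:ℂ) 1, z.im ≠ 0 → 0 < rho (z.re : ℂ) z) ∧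
    (∀ a b : ℝ, (a : ℂ) ∈ ball (0:ℂ) 1 → (b : ℂ) ∈ ball (0:ℂ) 1 → a ≠ b →
      ∃ z ∈ ball (0:ℂ) 1,
        ¬ rho (z.re : ℂ) z ≤
            (Real.exp (rho z a + rho a b + rho b z) / rho (a : ℂ) (b : ℂ)) *
              (rho (((a : ℂ).re : ℂ)) (a : ℂ) + rho (((b : ℂ).re : ℂ)) (b : ℂ))) := by
  refine ⟨?_, ?_, ?_, ?_⟩
  · intro z hz w hw
    rw [mem_ball_zero_iff] at hz hw
    have hzre : ‖(z.re : ℂ)‖ ≤ ‖z‖ := by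
      simpa using Complex.abs_re_le_norm z
    have hwre : ‖(w.re : ℂ)‖ ≤ ‖w‖ := by
      simpa using Complex.abs_re_le_norm w
    have h1 : 0 < 1 - ‖z‖ ^ 2 := by nlinarith [norm_nonneg z]
    have h2 : 0 < 1 - ‖w‖ ^ 2 := by nlinarith [norm_nonneg w]
    have hD : Real.sqrt ((1 - ‖z‖ ^ 2) * (1 - ‖w‖ ^ 2)) ≤
        Real.sqrt ((1 - ‖(z.re : ℂ)‖ ^ 2) * (1 - ‖(w.re : ℂ)‖ ^ 2)) := by
      apply Real.sqrt_le_sqrt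
      have hz0 := norm_nonneg (z.re : ℂ)
      have hw0 := norm_nonneg (w.re : ℂ)
      have hz2 : ‖(z.re : ℂ)‖ ^ 2 ≤ ‖z‖ ^ 2 := by nlinarith
      have hw2 : ‖(w.re : ℂ)‖ ^ 2 ≤ ‖w‖ ^ 2 := by nlinarith
      nlinarith
    have hDpos : 0 < Real.sqrt ((1 - ‖z‖ ^ 2) * (1 - ‖w‖ ^ 2)) :=
      Real.sqrt_pos.mpr (mul_pos h1 h2)
    have hN : ‖(z.re : ℂ) - (w.re : ℂ)‖ ≤ ‖z - w‖ := by
      rw [← Complex.ofReal_sub, Complex.norm_real]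
      simpa using Complex.abs_re_le_norm (z - w)
    unfold rho
    have : ‖(z.re : ℂ) - (w.re : ℂ)‖ /
        Real.sqrt ((1 - ‖(z.re : ℂ)‖ ^ 2) * (1 - ‖(w.re : ℂ)‖ ^ 2)) ≤
        ‖z - w‖ /
        Real.sqrt ((1 - ‖z‖ ^ 2) * (1 - ‖w‖ ^ 2)) :=
      div_le_div₀ (norm_nonneg _) hN hDpos hD
    have := Real.arsinh_le_arsinh.mpr this
    linarith
  · intro a b _ _ _
    exact ⟨by simpa using rho_self (a : ℂ), by simpa using rho_self (b : ℂ)⟩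
  · intro z hz him
    exact rho_re_pos hz him
  · intro a b ha hb hab
    refine ⟨Complex.I / 2, ?_, ?_⟩
    · rw [mem_ball_zero_iff]
      simp [norm_div]
      norm_num
    · have h1 : rho (((a : ℂ).re : ℂ)) (a : ℂ) = 0 := by simpa using rho_self (a : ℂ)
      have h2 : rho (((b : ℂ).re : ℂ)) (b : ℂ) = 0 := by simpa using rho_self (b : ℂ)
      have hpos : 0 < rho (((Complex.I / 2).re : ℂ)) (Complex.I / 2) := by
        apply rho_re_pos
        · rw [mem_ball_zero_iff]
          simp [norm_div]
          norm_num
        · simp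
      rw [h1, h2]
      simp only [add_zero, mul_zero]
      linarith
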